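/- Define u(z) = (z - ᾱ)/(αz·φ_β(z)) on [ᾱ, 1]. If μ_β ≤ μ_δ = ᾱ/α, then u is strictly increasing on [ᾱ,1] with u(ᾱ) = 0, u(1) = 1, and u'(1) = μ_δ - μ_β ≥ 0; hence u admits a well-defined inverse z(u) mapping [0,1] to [ᾱ,1]. -/

import Mathlib

open Set Finset

private lemma aux_one_sub_pow (z : ℝ) (h0 : 0 ≤ z) (h1 : z ≤ 1) :
    ∀ n : ℕ, 1 - z ^ n ≤ n * (1 - z) := by
  intro n
  induction n with
  | zero => simp
  | succ n ih =>
    have hz : z ^ n ≤ 1 := pow_le_one₀ h0 h1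
    have hzn : 0 ≤ z ^ n := pow_nonneg h0 n
    rw [pow_succ]
    push_cast
    nlinarith

private lemma aux_norm_mul_pow (c z : ℝ) (hc : 0 ≤ c) (hz : |z| ≤ 1) (n : ℕ) :
    ‖c * z ^ n‖ ≤ c := by
  rw [norm_mul, norm_pow, Real.norm_eq_abs, Real.norm_eq_abs, abs_of_nonneg hc]
  have : |z| ^ n ≤ 1 := pow_le_one₀ (abs_nonneg z) hz
  nlinarith

set_option maxHeartbeats 1000000 in
/-- In the recurrent regime `μ_β ≤ μ_δ = ᾱ/α`, the function
`u(z) = (z-ᾱ)/(αzφ_β(z))` is strictly increasing on `[ᾱ,1]` with `u(ᾱ)=0`,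
`u(1)=1`, `u'(1) = μ_δ - μ_β ≥ 0`, and it is a bijection from `[ᾱ,1]` onto
`[0,1]` (hence it admits a well-defined inverse `z(u) : [0,1] → [ᾱ,1]`). -/
theorem stmt10 (α : ℝ) (hα0 : 0 < α) (hα1 : α < 1)
    (b : ℕ → ℝ) (hbnn : ∀ n, 0 ≤ b n) (hbsum : HasSum b 1)
    (hb00 : 0 < b 0) (hb01 : b 0 < 1)
    (μβ : ℝ) (hμβ : HasSum (fun n : ℕ => (n : ℝ) * b n) μβ)
    (hrec : μβ ≤ (1 - α) / α)
    (φβ u : ℝ → ℝ)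
    (hφβ : ∀ z, φβ z = ∑' n : ℕ, b n * z ^ n)
    (hu : ∀ z, u z = (z - (1 - α)) / (α * z * φβ z)) :
    u (1 - α) = 0 ∧ u 1 = 1 ∧ StrictMonoOn u (Icc (1 - α) 1) ∧
    HasDerivWithinAt u ((1 - α) / α - μβ) (Icc (1 - α) 1) 1 ∧
    Set.BijOn u (Icc (1 - α) 1) (Icc 0 1) := by
  have ha0 : (0:ℝ) < 1 - α := by linarith
  have hb : Summable b := hbsum.summable
  have hnb : Summable (fun n : ℕ => (n : ℝ) * b n) := hμβ.summable
  have hμnn : 0 ≤ μβ :=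
    hasSum_le (fun i => mul_nonneg (Nat.cast_nonneg i) (hbnn i)) hasSum_zero hμβ
  set φ : ℝ → ℝ := fun z => ∑' n : ℕ, b n * z ^ n with hφdef
  set D : ℝ → ℝ := fun z => ∑' n : ℕ, (n : ℝ) * b n * z ^ (n - 1) with hDdef
  set ψ : ℝ → ℝ := fun z => ∑' n : ℕ, b n * (∑ i ∈ Finset.range n, z ^ i) with hψdef
  have hsub : Icc (1 - α) 1 ⊆ Icc (0:ℝ) 1 := Icc_subset_Icc (le_of_lt ha0) le_rfl
  -- summability of φ-terms
  have hsφ : ∀ z : ℝ, |z| ≤ 1 → Summable (fun n : ℕ => b n * z ^ n) := by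
    intro z hz
    exact Summable.of_norm_bounded hb fun n => aux_norm_mul_pow _ _ (hbnn n) hz n
  -- summability of D-terms
  have hsD : ∀ z : ℝ, |z| ≤ 1 → Summable (fun n : ℕ => (n : ℝ) * b n * z ^ (n - 1)) := by
    intro z hz
    exact Summable.of_norm_bounded hnb fun n =>
      aux_norm_mul_pow _ _ (mul_nonneg (Nat.cast_nonneg n) (hbnn n)) hz (n - 1)
  -- summability of ψ-terms
  have hsψ : ∀ z ∈ Icc (0:ℝ) 1, Summable (fun n : ℕ => b n * (∑ i ∈ Finset.range n, z ^ i)) := by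
    intro z hz
    apply Summable.of_norm_bounded hnb
    intro n
    rw [Real.norm_eq_abs, abs_of_nonneg (mul_nonneg (hbnn n)
      (Finset.sum_nonneg fun i _ => pow_nonneg hz.1 i))]
    have hle : (∑ i ∈ Finset.range n, z ^ i) ≤ n := by
      calc (∑ i ∈ Finset.range n, z ^ i) ≤ ∑ i ∈ Finset.range n, (1:ℝ) :=
            Finset.sum_le_sum fun i _ => pow_le_one₀ hz.1 hz.2
        _ = n := by simp
    nlinarith [hbnn n, Finset.sum_nonneg (fun i (_ : i ∈ Finset.range n) => pow_nonneg hz.1 i)]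
  have hφ1 : φ 1 = 1 := by
    simp only [hφdef, one_pow, mul_one]
    exact hbsum.tsum_eq
  have hψ1 : ψ 1 = μβ := by
    simp only [hψdef, one_pow, Finset.sum_const, Finset.card_range, nsmul_eq_mul, mul_one]
    rw [← hμβ.tsum_eq]
    exact tsum_congr fun n => mul_comm _ _
  have hφcont : ContinuousOn φ (Icc (0:ℝ) 1) := by
    apply continuousOn_tsum (u := b)
      (fun i => (continuous_const.mul (continuous_pow i)).continuousOn) hb
    intro n x hx
    exact aux_norm_mul_pow _ _ (hbnn n) (abs_le.2 ⟨by linarith [hx.1], hx.2⟩) n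
  have hψcont : ContinuousOn ψ (Icc (0:ℝ) 1) := by
    apply continuousOn_tsum (u := fun n : ℕ => (n : ℝ) * b n)
      (fun i => (continuous_const.mul (continuous_finset_sum _
        (fun j _ => continuous_pow j))).continuousOn) hnb
    intro n x hx
    show ‖b n * ∑ i ∈ Finset.range n, x ^ i‖ ≤ (n:ℝ) * b n
    rw [Real.norm_eq_abs, abs_of_nonneg (mul_nonneg (hbnn n)
      (Finset.sum_nonneg fun i _ => pow_nonneg hx.1 i))]
    have hle : (∑ i ∈ Finset.range n, x ^ i) ≤ n := by
      calc (∑ i ∈ Finset.range n, x ^ i) ≤ ∑ i ∈ Finset.range n, (1:ℝ) :=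
            Finset.sum_le_sum fun i _ => pow_le_one₀ hx.1 hx.2
        _ = n := by simp
    nlinarith [hbnn n, Finset.sum_nonneg (fun i (_ : i ∈ Finset.range n) => pow_nonneg hx.1 i)]
  have hφpos : ∀ z ∈ Icc (0:ℝ) 1, 0 < φ z := by
    intro z hz
    have h0 : b 0 ≤ φ z := by
      have := Summable.le_tsum (hsφ z (abs_le.2 ⟨by linarith [hz.1], hz.2⟩)) 0
        (fun j _ => mul_nonneg (hbnn j) (pow_nonneg hz.1 j))
      simpa using this
    linarith
  have hφlow : ∀ z ∈ Icc (0:ℝ) 1, 1 - (1 - z) * μβ ≤ φ z := by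
    intro z hz
    have habs : |z| ≤ 1 := abs_le.2 ⟨by linarith [hz.1], hz.2⟩
    have h1 : HasSum (fun n => b n - b n * z ^ n) (1 - φ z) :=
      hbsum.sub (hsφ z habs).hasSum
    have h2 : HasSum (fun n : ℕ => (1 - z) * ((n : ℝ) * b n)) ((1 - z) * μβ) :=
      hμβ.mul_left _
    have hle : 1 - φ z ≤ (1 - z) * μβ := by
      refine hasSum_le (fun n => ?_) h1 h2
      have := aux_one_sub_pow z hz.1 hz.2 n
      nlinarith [hbnn n]
    linarith
  have hDle : ∀ z ∈ Icc (0:ℝ) 1, D z ≤ μβ := by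
    intro z hz
    have habs : |z| ≤ 1 := abs_le.2 ⟨by linarith [hz.1], hz.2⟩
    refine hasSum_le (fun n => ?_) (hsD z habs).hasSum hμβ
    have h1 : z ^ (n - 1) ≤ 1 := pow_le_one₀ hz.1 hz.2
    nlinarith [mul_nonneg (Nat.cast_nonneg (α := ℝ) n) (hbnn n)]
  have hDnn : ∀ z ∈ Icc (0:ℝ) 1, 0 ≤ D z := by
    intro z hz
    exact tsum_nonneg fun n =>
      mul_nonneg (mul_nonneg (Nat.cast_nonneg n) (hbnn n)) (pow_nonneg hz.1 _)
  -- derivative of φ at interior points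
  have hφderiv : ∀ y ∈ Ioo (-1:ℝ) 1, HasDerivAt φ (D y) y := by
    intro y hy
    refine hasDerivAt_tsum_of_isPreconnected hnb isOpen_Ioo (convex_Ioo _ _).isPreconnected
      (g := fun n z => b n * z ^ n) (g' := fun n z => (n : ℝ) * b n * z ^ (n - 1))
      (fun n z _ => ?_) (fun n z hz => ?_)
      (show (0:ℝ) ∈ Ioo (-1:ℝ) 1 by norm_num) (hsφ 0 (by norm_num)) hy
    · have := (hasDerivAt_pow n z).const_mul (b n)
      refine this.congr_deriv ?_
      ring
    · exact aux_norm_mul_pow _ _ (mul_nonneg (Nat.cast_nonneg n) (hbnn n))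
        (abs_le.2 ⟨le_of_lt hz.1, le_of_lt hz.2⟩) (n - 1)
  -- key identity : φ z - 1 = (z - 1) * ψ z on [0,1]
  have hkey : ∀ z ∈ Icc (0:ℝ) 1, φ z - 1 = (z - 1) * ψ z := by
    intro z hz
    have habs : |z| ≤ 1 := abs_le.2 ⟨by linarith [hz.1], hz.2⟩
    have h1 : HasSum (fun n => b n * z ^ n - b n) (φ z - 1) :=
      (hsφ z habs).hasSum.sub hbsum
    have h2 : HasSum (fun n : ℕ => (z - 1) * (b n * ∑ i ∈ Finset.range n, z ^ i))
        ((z - 1) * ψ z) := (hsψ z hz).hasSum.mul_left _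
    have hfun : (fun n : ℕ => (z - 1) * (b n * ∑ i ∈ Finset.range n, z ^ i)) =
        fun n : ℕ => b n * z ^ n - b n := by
      funext n
      have hg := geom_sum_mul z n
      linear_combination b n * hg
    rw [hfun] at h2
    exact h1.unique h2
  -- derivative of φ within Icc at 1
  have hφd1 : HasDerivWithinAt φ μβ (Icc (1 - α) 1) 1 := by
    rw [hasDerivWithinAt_iff_tendsto_slope]
    have hmem : (1:ℝ) ∈ Icc (0:ℝ) 1 := by constructor <;> norm_num
    have hcw : Filter.Tendsto ψ (nhdsWithin 1 (Icc (0:ℝ) 1)) (nhds μβ) := by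
      have := hψcont 1 hmem
      rw [ContinuousWithinAt, hψ1] at this
      exact this
    have hsub2 : Icc (1 - α) 1 \ {1} ⊆ Icc (0:ℝ) 1 := fun x hx => hsub hx.1
    have ht : Filter.Tendsto ψ (nhdsWithin 1 (Icc (1 - α) 1 \ {1})) (nhds μβ) :=
      hcw.mono_left (nhdsWithin_mono 1 hsub2)
    refine ht.congr' ?_
    filter_upwards [self_mem_nhdsWithin] with z hz
    have hz1 : z ≠ 1 := hz.2
    have hzI : z ∈ Icc (0:ℝ) 1 := hsub hz.1
    rw [slope_def_field, hφ1, hkey z hzI]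
    field_simp [sub_ne_zero.2 hz1]
  -- transfer to u
  have huf : u = fun z => (z - (1 - α)) / (α * z * φ z) := by
    funext z; rw [hu z, hφβ z]
  have hne : ∀ z ∈ Icc (1 - α) (1:ℝ), α * z * φ z ≠ 0 := fun z hz =>
    ne_of_gt (mul_pos (mul_pos hα0 (lt_of_lt_of_le ha0 hz.1)) (hφpos z (hsub hz)))
  have hva : ((1 - α : ℝ) - (1 - α)) / (α * (1 - α) * φ (1 - α)) = 0 := by simp
  have hv1 : ((1:ℝ) - (1 - α)) / (α * 1 * φ 1) = 1 := by
    rw [hφ1]; field_simp; ring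
  have hcont : ContinuousOn (fun z => (z - (1 - α)) / (α * z * φ z)) (Icc (1 - α) 1) := by
    apply ContinuousOn.div
    · exact (continuous_id.sub continuous_const).continuousOn
    · exact ((continuous_const.mul continuous_id).continuousOn).mul (hφcont.mono hsub)
    · exact hne
  have hαμ : α * μβ ≤ 1 - α := by
    have := (le_div_iff₀ hα0).1 hrec
    linarith
  have hsm : StrictMonoOn (fun z => (z - (1 - α)) / (α * z * φ z)) (Icc (1 - α) 1) := by
    apply strictMonoOn_of_deriv_pos (convex_Icc _ _) hcont
    rw [interior_Icc]
    intro x hx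
    have hx0 : 0 < x := lt_trans ha0 hx.1
    have hxI : x ∈ Icc (0:ℝ) 1 := ⟨le_of_lt hx0, le_of_lt hx.2⟩
    have hφx : 0 < φ x := hφpos x hxI
    have hdφ : HasDerivAt φ (D x) x := hφderiv x ⟨by linarith, hx.2⟩
    have hden : HasDerivAt (fun z => α * z * φ z) (α * 1 * φ x + α * x * D x) x :=
      ((hasDerivAt_id x).const_mul α).mul hdφ
    have hdenpos : 0 < α * x * φ x := mul_pos (mul_pos hα0 hx0) hφx
    have hq : HasDerivAt (fun z => (z - (1 - α)) / (α * z * φ z))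
        ((1 * (α * x * φ x) - (x - (1 - α)) * (α * 1 * φ x + α * x * D x)) / (α * x * φ x) ^ 2)
        x := ((hasDerivAt_id x).sub_const _).div hden (ne_of_gt hdenpos)
    rw [hq.deriv]
    apply div_pos
    · have h1 := hφlow x hxI
      have h2 := hDle x hxI
      have h3 := hDnn x hxI
      have hxa : 0 ≤ (x - (1 - α)) * x := mul_nonneg (by linarith [hx.1]) (le_of_lt hx0)
      have h4 : (x - (1 - α)) * x * D x ≤ (x - (1 - α)) * x * μβ :=
        mul_le_mul_of_nonneg_left h2 hxa
      have hB : (1 - α) * (1 - (1 - x) * μβ) ≤ (1 - α) * φ x :=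
        mul_le_mul_of_nonneg_left h1 (le_of_lt ha0)
      have hQnn : (0:ℝ) ≤ (x - (1 - α)) ^ 2 + (1 - α) * α :=
        add_nonneg (sq_nonneg _) (le_of_lt (mul_pos ha0 hα0))
      have e2 : α * (μβ * ((x - (1 - α)) ^ 2 + (1 - α) * α)) ≤
          (1 - α) * ((x - (1 - α)) ^ 2 + (1 - α) * α) := by
        calc α * (μβ * ((x - (1 - α)) ^ 2 + (1 - α) * α))
            = (α * μβ) * ((x - (1 - α)) ^ 2 + (1 - α) * α) := by ring
          _ ≤ (1 - α) * ((x - (1 - α)) ^ 2 + (1 - α) * α) :=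
              mul_le_mul_of_nonneg_right hαμ hQnn
      have eQ : (x - (1 - α)) ^ 2 + (1 - α) * α < α := by nlinarith [hx.1, hx.2]
      have e3 : (1 - α) * ((x - (1 - α)) ^ 2 + (1 - α) * α) < (1 - α) * α :=
        mul_lt_mul_of_pos_left eQ ha0
      have e4 : α * (μβ * ((x - (1 - α)) ^ 2 + (1 - α) * α)) < α * (1 - α) := by
        calc α * (μβ * ((x - (1 - α)) ^ 2 + (1 - α) * α))
            ≤ (1 - α) * ((x - (1 - α)) ^ 2 + (1 - α) * α) := e2
          _ < (1 - α) * α := e3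
          _ = α * (1 - α) := by ring
      have hS : μβ * ((x - (1 - α)) ^ 2 + (1 - α) * α) < 1 - α :=
        lt_of_mul_lt_mul_left e4 (le_of_lt hα0)
      have hT : (1 - α) * (1 - (1 - x) * μβ) - (x - (1 - α)) * x * μβ =
          (1 - α) - μβ * ((x - (1 - α)) ^ 2 + (1 - α) * α) := by ring
      have hN : 0 < (1 - α) * φ x - (x - (1 - α)) * x * D x := by linarith
      have hnum : 1 * (α * x * φ x) - (x - (1 - α)) * (α * 1 * φ x + α * x * D x) =
          α * ((1 - α) * φ x - (x - (1 - α)) * x * D x) := by ring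
      rw [hnum]
      exact mul_pos hα0 hN
    · exact pow_pos hdenpos 2
  have hd1 : HasDerivWithinAt (fun z => (z - (1 - α)) / (α * z * φ z))
      ((1 - α) / α - μβ) (Icc (1 - α) 1) 1 := by
    have hdenw : HasDerivWithinAt (fun z => α * z * φ z)
        (α * 1 * φ 1 + α * 1 * μβ) (Icc (1 - α) 1) 1 :=
      ((hasDerivWithinAt_id 1 _).const_mul α).mul hφd1
    have h1 : HasDerivWithinAt (fun z : ℝ => z - (1 - α)) 1 (Icc (1 - α) 1) 1 :=
      (hasDerivWithinAt_id 1 _).sub_const _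
    have hne1 : α * 1 * φ 1 ≠ 0 := hne 1 ⟨by linarith, le_rfl⟩
    have hq := h1.div hdenw hne1
    refine hq.congr_deriv ?_
    rw [hφ1]
    field_simp
    ring
  have hmem_a : (1 - α : ℝ) ∈ Icc (1 - α) (1:ℝ) := ⟨le_rfl, by linarith⟩
  have hmem_1 : (1 : ℝ) ∈ Icc (1 - α) (1:ℝ) := ⟨by linarith, le_rfl⟩
  have hmono := hsm.monotoneOn
  simp only [huf]
  refine ⟨hva, hv1, hsm, hd1, ?_, hsm.injOn, ?_⟩
  · intro x hx
    have h1 := hmono hmem_a hx hx.1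
    have h2 := hmono hx hmem_1 hx.2
    simp only [hva] at h1
    simp only [hv1] at h2
    exact ⟨h1, h2⟩
  · have := intermediate_value_Icc (by linarith : (1 - α : ℝ) ≤ 1) hcont
    rw [hva, hv1] at this
    exact this
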